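/- Let q be a prime power, let d, r > 0 be integers with d dividing q−1, and let h ∈ F_q[x]. Then f(x) := x^r · h(x^{(q−1)/d}) is a permutation polynomial of F_q if and only if both (1) gcd(r, (q−1)/d) = 1 and (2) the map ζ ↦ ζ^r · h(ζ)^{(q−1)/d} is a bijection of μ_d (note that μ_d ⊆ F_q since d divides q−1). -/

import Mathlib

open Polynomial

/-- Let q be a prime power, let d, r > 0 be integers with d dividing q−1, and let
h ∈ F_q[x]. Then f(x) := x^r · h(x^{(q−1)/d}) is a permutation polynomial of F_q if and
only if both (1) gcd(r, (q−1)/d) = 1 and (2) the map ζ ↦ ζ^r · h(ζ)^{(q−1)/d} is a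
bijection of μ_d (note μ_d ⊆ F_q since d ∣ q−1). -/
theorem stmt_0 {F : Type*} [Field F] [Fintype F] {q : ℕ} (hq : Fintype.card F = q)
    {d r : ℕ} (hd : 0 < d) (hr : 0 < r) (hdvd : d ∣ q - 1) (h : F[X]) :
    Function.Bijective (fun c : F => (X ^ r * h.comp (X ^ ((q - 1) / d))).eval c) ↔
      (Nat.gcd r ((q - 1) / d) = 1 ∧
        Set.BijOn (fun ζ : F => ζ ^ r * h.eval ζ ^ ((q - 1) / d))
          {ζ : F | ζ ^ d = 1} {ζ : F | ζ ^ d = 1}) := by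
  classical
  set s := (q - 1) / d with hs
  have hcard : Fintype.card Fˣ = q - 1 := by rw [Fintype.card_units, hq]
  have hq2 : 2 ≤ q := hq ▸ Fintype.one_lt_card
  have hq1 : 0 < q - 1 := by omega
  have hsd : s * d = q - 1 := Nat.div_mul_cancel hdvd
  have hs0 : 0 < s := Nat.div_pos (Nat.le_of_dvd hq1 hdvd) hd
  have heval : ∀ c : F, (X ^ r * h.comp (X ^ s)).eval c = c ^ r * h.eval (c ^ s) := by
    intro c; simp [eval_comp]
  have hpow1 : ∀ a : F, a ≠ 0 → a ^ (q - 1) = 1 := fun a ha => by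
    rw [← hq]; exact FiniteField.pow_card_sub_one_eq_one a ha
  have hmu : ∀ a : F, a ≠ 0 → (a ^ s) ^ d = 1 := fun a ha => by
    rw [← pow_mul, hsd]; exact hpow1 a ha
  have hmu_ne : ∀ ζ : F, ζ ^ d = 1 → ζ ≠ 0 := by
    intro ζ hζ h0
    rw [h0, zero_pow hd.ne'] at hζ
    exact zero_ne_one hζ
  -- surjectivity of the s-th power map onto μ_d
  have hsurj : ∀ ζ : F, ζ ^ d = 1 → ∃ c : F, c ≠ 0 ∧ c ^ s = ζ := by
    intro ζ hζ
    have hζ0 : ζ ≠ 0 := hmu_ne ζ hζ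
    obtain ⟨g, hg⟩ := IsCyclic.exists_generator (α := Fˣ)
    have hog : orderOf g = q - 1 := by
      rw [orderOf_eq_card_of_forall_mem_zpowers hg, Nat.card_eq_fintype_card, hcard]
    set u : Fˣ := Units.mk0 ζ hζ0 with hu
    obtain ⟨k, hk⟩ := Subgroup.mem_zpowers_iff.mp (hg u)
    have hud : u ^ (d : ℤ) = 1 := by
      ext
      push_cast
      simp [hu, hζ]
    have h1 : g ^ (k * (d : ℤ)) = 1 := by
      rw [zpow_mul, hk, hud]
    have h2 : ((q - 1 : ℕ) : ℤ) ∣ k * d := by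
      rw [← hog]
      exact orderOf_dvd_iff_zpow_eq_one.mpr h1
    have h3 : (s : ℤ) ∣ k := by
      have : (s : ℤ) * (d : ℤ) ∣ k * (d : ℤ) := by
        rw [← Nat.cast_mul, hsd]; exact h2
      exact (mul_dvd_mul_iff_right (by exact_mod_cast hd.ne' : (d : ℤ) ≠ 0)).mp this
    obtain ⟨m, hm⟩ := h3
    refine ⟨((g ^ m : Fˣ) : F), Units.ne_zero _, ?_⟩
    have : ((g ^ m : Fˣ)) ^ s = u := by
      rw [← hk, hm, ← zpow_natCast, ← zpow_mul, mul_comm]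
    calc ((g ^ m : Fˣ) : F) ^ s = (((g ^ m) ^ s : Fˣ) : F) := by push_cast; ring
      _ = ζ := by rw [this, hu, Units.val_mk0]
  constructor
  · intro hf
    have hf0 : (fun c : F => (X ^ r * h.comp (X ^ s)).eval c) 0 = 0 := by
      simp [heval, zero_pow hr.ne']
    have hfne : ∀ c : F, c ≠ 0 → c ^ r * h.eval (c ^ s) ≠ 0 := by
      intro c hc hcontra
      apply hc
      apply hf.injective
      rw [hf0]
      simpa [heval] using hcontra
    have hmaps : Set.MapsTo (fun ζ : F => ζ ^ r * h.eval ζ ^ s)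
        {ζ : F | ζ ^ d = 1} {ζ : F | ζ ^ d = 1} := by
      intro ζ hζ
      obtain ⟨c, hc0, hcs⟩ := hsurj ζ hζ
      have key : ζ ^ r * h.eval ζ ^ s = (c ^ r * h.eval (c ^ s)) ^ s := by
        rw [← hcs]; ring
      simp only [Set.mem_setOf_eq, key, ← pow_mul]
      rw [hsd]
      exact hpow1 _ (hfne c hc0)
    have hsurjOn : Set.SurjOn (fun ζ : F => ζ ^ r * h.eval ζ ^ s)
        {ζ : F | ζ ^ d = 1} {ζ : F | ζ ^ d = 1} := by
      intro η hη
      obtain ⟨b, hb0, hbs⟩ := hsurj η hη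
      obtain ⟨c, hc⟩ := hf.surjective b
      simp only [heval] at hc
      have hc0 : c ≠ 0 := by
        intro h0
        rw [h0] at hc
        simp [zero_pow hr.ne'] at hc
        exact hb0 hc.symm
      refine ⟨c ^ s, hmu c hc0, ?_⟩
      simp only
      rw [← hbs, ← hc]
      ring
    have hgcd : Nat.gcd r s = 1 := by
      by_contra hne
      set t := Nat.gcd r s with ht
      have ht0 : 0 < t := Nat.gcd_pos_of_pos_left _ hr
      have ht1 : 1 < t := by omega
      have htq : t ∣ q - 1 := (Nat.gcd_dvd_right r s).trans ⟨d, hsd.symm⟩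
      obtain ⟨g, hg⟩ := IsCyclic.exists_generator (α := Fˣ)
      have hog : orderOf g = q - 1 := by
        rw [orderOf_eq_card_of_forall_mem_zpowers hg, Nat.card_eq_fintype_card, hcard]
      set u : Fˣ := g ^ ((q - 1) / t) with hu
      have hut : u ^ t = 1 := by
        rw [hu, ← pow_mul, Nat.div_mul_cancel htq, ← hog, pow_orderOf_eq_one]
      have hu1 : u ≠ 1 := by
        intro h1
        have := orderOf_dvd_of_pow_eq_one (n := (q - 1) / t) (by rw [← hu, h1])
        rw [hog] at this
        have hlt : (q - 1) / t < q - 1 := Nat.div_lt_self hq1 ht1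
        have hpos : 0 < (q - 1) / t := Nat.div_pos (Nat.le_of_dvd hq1 htq) ht0
        have := Nat.le_of_dvd hpos this
        omega
      set ε : F := (u : F) with hε
      have hε1 : ε ≠ 1 := by
        intro h1
        apply hu1
        ext
        rw [Units.val_one]
        exact h1
      have hεt : ε ^ t = 1 := by
        rw [hε, ← Units.val_pow_eq_pow_val, hut, Units.val_one]
      have hεr : ε ^ r = 1 := by
        obtain ⟨m, hm⟩ := Nat.gcd_dvd_left r s
        rw [hm, pow_mul, hεt, one_pow]
      have hεs : ε ^ s = 1 := by
        obtain ⟨m, hm⟩ := Nat.gcd_dvd_right r s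
        rw [hm, pow_mul, hεt, one_pow]
      have : (fun c : F => (X ^ r * h.comp (X ^ s)).eval c) ε =
          (fun c : F => (X ^ r * h.comp (X ^ s)).eval c) 1 := by
        simp only [heval, hεr, hεs, one_pow]
      exact hε1 (hf.injective this)
    exact ⟨hgcd, (Set.Finite.surjOn_iff_bijOn_of_mapsTo (Set.toFinite _) hmaps).mp hsurjOn⟩
  · rintro ⟨hgcd, hbij⟩
    have hinj : Function.Injective (fun c : F => (X ^ r * h.comp (X ^ s)).eval c) := by
      intro a b hab
      simp only [heval] at hab
      -- h.eval of an element of μ_d is nonzero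
      have hne : ∀ ζ : F, ζ ^ d = 1 → h.eval ζ ≠ 0 := by
        intro ζ hζ h0
        have := hbij.mapsTo hζ
        simp only [Set.mem_setOf_eq, h0, mul_zero, zero_pow hs0.ne'] at this
        rw [zero_pow hd.ne'] at this
        exact zero_ne_one this
      rcases eq_or_ne a 0 with ha | ha
      · rcases eq_or_ne b 0 with hb | hb
        · rw [ha, hb]
        · exfalso
          rw [ha, zero_pow hr.ne', zero_mul] at hab
          have hb0 : h.eval (b ^ s) = 0 := by
            rcases mul_eq_zero.mp hab.symm with h1 | h1
            · exact absurd h1 (pow_ne_zero r hb)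
            · exact h1
          exact hne _ (hmu b hb) hb0
      · rcases eq_or_ne b 0 with hb | hb
        · exfalso
          rw [hb, zero_pow hr.ne', zero_mul] at hab
          have ha0 : h.eval (a ^ s) = 0 := by
            rcases mul_eq_zero.mp hab with h1 | h1
            · exact absurd h1 (pow_ne_zero r ha)
            · exact h1
          exact hne _ (hmu a ha) ha0
        · -- both nonzero
          have hgab : (fun ζ : F => ζ ^ r * h.eval ζ ^ s) (a ^ s) =
              (fun ζ : F => ζ ^ r * h.eval ζ ^ s) (b ^ s) := by
            simp only
            have e1 : (a ^ s) ^ r * h.eval (a ^ s) ^ s = (a ^ r * h.eval (a ^ s)) ^ s := by ring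
            have e2 : (b ^ s) ^ r * h.eval (b ^ s) ^ s = (b ^ r * h.eval (b ^ s)) ^ s := by ring
            rw [e1, e2, hab]
          have hss : a ^ s = b ^ s := hbij.injOn (hmu a ha) (hmu b hb) hgab
          have hrr : a ^ r = b ^ r := by
            rw [hss] at hab
            exact mul_right_cancel₀ (hne _ (hmu b hb)) hab
          -- now conclude a = b from a^r = b^r, a^s = b^s, gcd r s = 1
          set u : F := a * b⁻¹ with hud
          have hur : u ^ r = 1 := by
            rw [hud, mul_pow, hrr, inv_pow, mul_inv_cancel₀ (pow_ne_zero r hb)]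
          have hus : u ^ s = 1 := by
            rw [hud, mul_pow, hss, inv_pow, mul_inv_cancel₀ (pow_ne_zero s hb)]
          have hou : orderOf u ∣ 1 := by
            rw [← hgcd]
            exact Nat.dvd_gcd (orderOf_dvd_of_pow_eq_one hur) (orderOf_dvd_of_pow_eq_one hus)
          have hu1 : u = 1 := orderOf_eq_one_iff.mp (Nat.dvd_one.mp hou)
          field_simp [hud] at hu1
          rw [hud] at hu1
          exact (mul_inv_eq_one₀ hb).mp hu1
    exact Finite.injective_iff_bijective.mp hinj
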